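/- Let m be a positive integer, let n > 1 be a real number, and let E ⊆ ℝ^m be Ahlfors-regular of dimension n with constant C > 0. Let 1 ≤ q < n and let f ∈ L^q(E, H^n|_E). Then for H^n-almost every x ∈ E, the integral ∫_E |x−z|^{-(n-1)} |f(z)| dH^n(z) is finite; in particular the potential P(f)(x) = ∫_E |x−z|^{-(n-1)} f(z) dH^n(z) is defined H^n-almost everywhere on E. -/

import Mathlib

open MeasureTheory Metric
open scoped MeasureTheory

open Set
open scoped ENNReal

open MeasureTheory Metric Set
open scoped ENNReal

-- dyadic covering, small radii
lemma exists_nat_small {d : ℝ} (h0 : 0 < d) (h1 : d ≤ 1) :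
    ∃ k : ℕ, (2:ℝ) ^ (-((k:ℝ)+1)) < d ∧ d ≤ (2:ℝ) ^ (-(k:ℝ)) := by
  obtain ⟨j, hj⟩ := pow_unbounded_of_one_lt (1/d) one_lt_two
  have hP : ∃ k : ℕ, (1:ℝ)/d < 2 ^ (k+1) :=
    ⟨j, lt_of_lt_of_le hj (pow_le_pow_right₀ (by norm_num) (Nat.le_succ j))⟩
  classical
  obtain ⟨k, hspec, hmin⟩ : ∃ k : ℕ, (1:ℝ)/d < 2 ^ (k+1) ∧
      ∀ i < k, ¬ ((1:ℝ)/d < 2 ^ (i+1)) :=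
    ⟨Nat.find hP, Nat.find_spec hP, fun i hi => Nat.find_min hP hi⟩
  refine ⟨k, ?_, ?_⟩
  · have hpow : (2:ℝ) ^ (-((k:ℝ)+1)) = ((2:ℝ) ^ (k+1 : ℕ))⁻¹ := by
      rw [Real.rpow_neg (by norm_num), ← Real.rpow_natCast]
      push_cast; ring_nf
    rw [hpow]
    have hp : (0:ℝ) < 2 ^ (k+1 : ℕ) := by positivity
    rw [div_lt_iff₀ h0] at hspec
    rw [inv_lt_iff_one_lt_mul₀ hp]
    nlinarith
  · have hpow : (2:ℝ) ^ (-(k:ℝ)) = ((2:ℝ) ^ (k : ℕ))⁻¹ := by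
      rw [Real.rpow_neg (by norm_num), Real.rpow_natCast]
    rw [hpow]
    rcases Nat.eq_zero_or_pos k with h | h
    · simp [h, h1]
    · have hmin' : ¬ ((1:ℝ)/d < 2 ^ (k-1+1)) := hmin (k-1) (by omega)
      have hkk : k - 1 + 1 = k := by omega
      rw [hkk] at hmin'
      push_neg at hmin'
      have hp : (0:ℝ) < 2 ^ (k : ℕ) := by positivity
      rw [le_div_iff₀ h0] at hmin'
      have h3 := mul_le_mul_of_nonneg_left hmin' (inv_nonneg.mpr hp.le)
      rw [mul_one, ← mul_assoc, inv_mul_cancel₀ hp.ne', one_mul] at h3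
      exact h3

-- dyadic covering, large radii
lemma exists_nat_large {d : ℝ} (h1 : 1 < d) :
    ∃ k : ℕ, (2:ℝ) ^ (k:ℝ) < d ∧ d ≤ (2:ℝ) ^ ((k:ℝ)+1) := by
  obtain ⟨j, hj⟩ := pow_unbounded_of_one_lt d one_lt_two
  have hP : ∃ k : ℕ, d ≤ 2 ^ (k+1) :=
    ⟨j, le_of_lt (lt_of_lt_of_le hj (pow_le_pow_right₀ (by norm_num) (Nat.le_succ j)))⟩
  classical
  obtain ⟨k, hspec, hmin⟩ : ∃ k : ℕ, d ≤ (2:ℝ) ^ (k+1) ∧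
      ∀ i < k, ¬ (d ≤ (2:ℝ) ^ (i+1)) :=
    ⟨Nat.find hP, Nat.find_spec hP, fun i hi => Nat.find_min hP hi⟩
  have hc : ∀ i : ℕ, (2:ℝ) ^ (i:ℝ) = (2:ℝ) ^ (i:ℕ) := fun i => Real.rpow_natCast 2 i
  refine ⟨k, ?_, ?_⟩
  · rw [hc]
    rcases Nat.eq_zero_or_pos k with h | h
    · simpa [h] using h1
    · have hmin' : ¬ (d ≤ 2 ^ (k-1+1)) := hmin (k-1) (by omega)
      have hkk : k - 1 + 1 = k := by omega
      rw [hkk] at hmin'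
      linarith [not_le.mp hmin']
  · have : (2:ℝ) ^ ((k:ℝ)+1) = (2:ℝ) ^ (k+1 : ℕ) := by
      rw [← Real.rpow_natCast]; push_cast; ring_nf
    rw [this]; exact hspec





variable {α : Type*} [MeasurableSpace α] [MetricSpace α] [OpensMeasurableSpace α]

lemma annulus_est (ν : Measure α) (x : α) {a r0 r1 : ℝ} (h0 : 0 < r0) (ha : 0 ≤ a) :
    ∫⁻ z in closedBall x r1 \ closedBall x r0, ENNReal.ofReal (dist x z ^ (-a)) ∂ν ≤
      ENNReal.ofReal (r0 ^ (-a)) * ν (closedBall x r1) := by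
  have hmeas : MeasurableSet (closedBall x r1 \ closedBall x r0) :=
    measurableSet_closedBall.diff measurableSet_closedBall
  calc ∫⁻ z in closedBall x r1 \ closedBall x r0, ENNReal.ofReal (dist x z ^ (-a)) ∂ν
      ≤ ∫⁻ _ in closedBall x r1 \ closedBall x r0, ENNReal.ofReal (r0 ^ (-a)) ∂ν := by
        refine setLIntegral_mono' hmeas fun z hz => ?_
        refine ENNReal.ofReal_le_ofReal ?_
        have hd : r0 < dist x z := by
          rw [dist_comm]; exact lt_of_not_ge hz.2
        exact Real.rpow_le_rpow_of_nonpos h0 hd.le (neg_nonpos.2 ha)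
    _ = ENNReal.ofReal (r0 ^ (-a)) * ν (closedBall x r1 \ closedBall x r0) := by
        rw [setLIntegral_const]
    _ ≤ ENNReal.ofReal (r0 ^ (-a)) * ν (closedBall x r1) := by
        exact mul_le_mul_right (measure_mono diff_subset) _

lemma near_est (ν : Measure α) (x : α) {A nn a : ℝ} (hA : 0 ≤ A) (ha : 0 < a) (han : a < nn)
    (hball : ∀ t : ℝ, 0 < t → ν (closedBall x t) ≤ ENNReal.ofReal (A * t ^ nn)) :
    ∫⁻ z in closedBall x 1, ENNReal.ofReal (dist x z ^ (-a)) ∂ν ≤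
      ENNReal.ofReal (A * 2 ^ a) * (1 - ENNReal.ofReal ((2:ℝ) ^ (a - nn)))⁻¹ := by
  set S : ℕ → Set α := fun k =>
    closedBall x ((2:ℝ) ^ (-(k:ℝ))) \ closedBall x ((2:ℝ) ^ (-((k:ℝ)+1))) with hS
  have hcover : closedBall x 1 ⊆ {x} ∪ ⋃ k, S k := by
    intro z hz
    rcases eq_or_ne z x with rfl | hzx
    · exact Or.inl rfl
    · have hd0 : 0 < dist z x := dist_pos.2 hzx
      obtain ⟨k, hk1, hk2⟩ := exists_nat_small hd0 (mem_closedBall.1 hz)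
      refine Or.inr (mem_iUnion.2 ⟨k, mem_closedBall.2 hk2, fun hmem => ?_⟩)
      exact absurd (mem_closedBall.1 hmem) (not_le.2 hk1)
  have hsing : ∫⁻ z in ({x} : Set α), ENNReal.ofReal (dist x z ^ (-a)) ∂ν = 0 := by
    have : ∫⁻ z in ({x} : Set α), ENNReal.ofReal (dist x z ^ (-a)) ∂ν ≤
        ∫⁻ _ in ({x} : Set α), 0 ∂ν := by
      refine setLIntegral_mono' isClosed_singleton.measurableSet fun z hz => ?_
      rcases hz with rfl
      simp [Real.zero_rpow (neg_ne_zero.2 ha.ne')]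
    simpa using this
  have hterm : ∀ k : ℕ,
      ENNReal.ofReal (((2:ℝ) ^ (-((k:ℝ)+1))) ^ (-a)) *
        ENNReal.ofReal (A * ((2:ℝ) ^ (-(k:ℝ))) ^ nn) =
      ENNReal.ofReal (A * 2 ^ a) * (ENNReal.ofReal ((2:ℝ) ^ (a - nn))) ^ k := by
    intro k
    rw [← ENNReal.ofReal_pow (by positivity), ← ENNReal.ofReal_mul (by positivity),
      ← ENNReal.ofReal_mul (by positivity)]
    congr 1
    rw [← Real.rpow_natCast ((2:ℝ) ^ (a-nn)) k, ← Real.rpow_mul two_pos.le,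
      ← Real.rpow_mul two_pos.le, ← Real.rpow_mul two_pos.le,
      show (-((k:ℝ)+1))*(-a) = a + ((a-nn)*(k:ℝ) + (k:ℝ)*nn) by ring,
      Real.rpow_add two_pos, Real.rpow_add two_pos,
      show (-(k:ℝ))*nn = -((k:ℝ)*nn) by ring, Real.rpow_neg two_pos.le]
    have hpos : (0:ℝ) < 2 ^ ((k:ℝ)*nn) := Real.rpow_pos_of_pos two_pos _
    field_simp
  calc ∫⁻ z in closedBall x 1, ENNReal.ofReal (dist x z ^ (-a)) ∂ν
      ≤ ∫⁻ z in ({x} ∪ ⋃ k, S k), ENNReal.ofReal (dist x z ^ (-a)) ∂ν :=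
        lintegral_mono_set hcover
    _ ≤ ∫⁻ z in ({x} : Set α), ENNReal.ofReal (dist x z ^ (-a)) ∂ν +
          ∫⁻ z in (⋃ k, S k), ENNReal.ofReal (dist x z ^ (-a)) ∂ν :=
        lintegral_union_le _ _ _
    _ = ∫⁻ z in (⋃ k, S k), ENNReal.ofReal (dist x z ^ (-a)) ∂ν := by rw [hsing, zero_add]
    _ ≤ ∑' k, ∫⁻ z in S k, ENNReal.ofReal (dist x z ^ (-a)) ∂ν := lintegral_iUnion_le _ _
    _ ≤ ∑' k, ENNReal.ofReal (A * 2 ^ a) * (ENNReal.ofReal ((2:ℝ) ^ (a - nn))) ^ k := by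
        refine ENNReal.tsum_le_tsum fun k => ?_
        rw [← hterm k]
        refine le_trans (annulus_est ν x (Real.rpow_pos_of_pos two_pos _) ha.le) ?_
        exact mul_le_mul_right (hball _ (Real.rpow_pos_of_pos two_pos _)) _
    _ = ENNReal.ofReal (A * 2 ^ a) * (1 - ENNReal.ofReal ((2:ℝ) ^ (a - nn)))⁻¹ := by
        rw [ENNReal.tsum_mul_left, ENNReal.tsum_geometric]

lemma far_est (ν : Measure α) (x : α) {A nn a : ℝ} (hA : 0 ≤ A) (hnn : 0 ≤ nn) (ha : nn < a)
    (hball : ∀ t : ℝ, 0 < t → ν (closedBall x t) ≤ ENNReal.ofReal (A * t ^ nn)) :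
    ∫⁻ z in (closedBall x 1)ᶜ, ENNReal.ofReal (dist x z ^ (-a)) ∂ν ≤
      ENNReal.ofReal (A * 2 ^ nn) * (1 - ENNReal.ofReal ((2:ℝ) ^ (nn - a)))⁻¹ := by
  set S : ℕ → Set α := fun k =>
    closedBall x ((2:ℝ) ^ ((k:ℝ)+1)) \ closedBall x ((2:ℝ) ^ ((k:ℝ))) with hS
  have hcover : (closedBall x 1)ᶜ ⊆ ⋃ k, S k := by
    intro z hz
    have hd1 : 1 < dist z x := not_le.1 (fun h => hz (mem_closedBall.2 h))
    obtain ⟨k, hk1, hk2⟩ := exists_nat_large hd1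
    refine mem_iUnion.2 ⟨k, mem_closedBall.2 hk2, fun hmem => ?_⟩
    exact absurd (mem_closedBall.1 hmem) (not_le.2 hk1)
  have hterm : ∀ k : ℕ,
      ENNReal.ofReal (((2:ℝ) ^ ((k:ℝ))) ^ (-a)) *
        ENNReal.ofReal (A * ((2:ℝ) ^ ((k:ℝ)+1)) ^ nn) =
      ENNReal.ofReal (A * 2 ^ nn) * (ENNReal.ofReal ((2:ℝ) ^ (nn - a))) ^ k := by
    intro k
    rw [← ENNReal.ofReal_pow (by positivity), ← ENNReal.ofReal_mul (by positivity),
      ← ENNReal.ofReal_mul (by positivity)]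
    congr 1
    rw [← Real.rpow_natCast ((2:ℝ) ^ (nn-a)) k, ← Real.rpow_mul two_pos.le,
      ← Real.rpow_mul two_pos.le, ← Real.rpow_mul two_pos.le,
      show ((k:ℝ)+1)*nn = nn + ((nn-a)*(k:ℝ) + (k:ℝ)*a) by ring,
      Real.rpow_add two_pos, Real.rpow_add two_pos,
      show (k:ℝ)*(-a) = -((k:ℝ)*a) by ring, Real.rpow_neg two_pos.le]
    have hpos : (0:ℝ) < 2 ^ ((k:ℝ)*a) := Real.rpow_pos_of_pos two_pos _
    field_simp
  calc ∫⁻ z in (closedBall x 1)ᶜ, ENNReal.ofReal (dist x z ^ (-a)) ∂ν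
      ≤ ∫⁻ z in (⋃ k, S k), ENNReal.ofReal (dist x z ^ (-a)) ∂ν :=
        lintegral_mono_set hcover
    _ ≤ ∑' k, ∫⁻ z in S k, ENNReal.ofReal (dist x z ^ (-a)) ∂ν := lintegral_iUnion_le _ _
    _ ≤ ∑' k, ENNReal.ofReal (A * 2 ^ nn) * (ENNReal.ofReal ((2:ℝ) ^ (nn - a))) ^ k := by
        refine ENNReal.tsum_le_tsum fun k => ?_
        rw [← hterm k]
        refine le_trans (annulus_est ν x (Real.rpow_pos_of_pos two_pos _) (hnn.trans ha.le)) ?_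
        exact mul_le_mul_right (hball _ (Real.rpow_pos_of_pos two_pos _)) _
    _ = ENNReal.ofReal (A * 2 ^ nn) * (1 - ENNReal.ofReal ((2:ℝ) ^ (nn - a)))⁻¹ := by
        rw [ENNReal.tsum_mul_left, ENNReal.tsum_geometric]

/-- If E ⊆ ℝ^m is Ahlfors-regular of dimension n > 1 (real) with constant C,
1 ≤ q < n, and f ∈ L^q(E, H^n|_E), then for H^n-a.e. x ∈ E the integral
∫_E |x−z|^{-(n-1)} |f(z)| dH^n(z) is finite; in particular the potential
P(f)(x) = ∫_E |x−z|^{-(n-1)} f(z) dH^n(z) is defined H^n-a.e. on E. -/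
theorem stmt_18 (m : ℕ) (hm : 0 < m) (n : ℝ) (hn : 1 < n) (C : ℝ) (hC : 0 < C)
    (E : Set (EuclideanSpace ℝ (Fin m)))
    (hE_closed : IsClosed E) (hE_nontriv : E.Nontrivial)
    (hE_reg : ∀ x ∈ E, ∀ t : ℝ, 0 < t → ENNReal.ofReal t ≤ EMetric.diam E →
      ENNReal.ofReal (C⁻¹ * t ^ n) ≤ μH[n] (E ∩ Metric.closedBall x t) ∧
        μH[n] (E ∩ Metric.closedBall x t) ≤ ENNReal.ofReal (C * t ^ n))
    (q : ℝ) (hq1 : 1 ≤ q) (hqn : q < n)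
    (f : EuclideanSpace ℝ (Fin m) → ℝ)
    (hf : MemLp f (ENNReal.ofReal q) (μH[n].restrict E)) :
    ∀ᵐ x ∂(μH[n].restrict E),
      ∫⁻ z, ENNReal.ofReal (dist x z ^ (-(n - 1))) * (‖f z‖₊ : ENNReal)
          ∂(μH[n].restrict E) < ⊤ := by
  classical
  set μ : Measure (EuclideanSpace ℝ (Fin m)) := μH[n].restrict E with hμdef
  have hE_meas : MeasurableSet E := hE_closed.measurableSet
  obtain ⟨x0, hx0⟩ := hE_nontriv.nonempty
  -- ball growth bound for μ
  have hball : ∀ x ∈ E, ∀ t : ℝ, 0 < t → μ (closedBall x t) ≤ ENNReal.ofReal (C * t ^ n) := by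
    intro x hx t ht
    rw [hμdef, Measure.restrict_apply measurableSet_closedBall, Set.inter_comm]
    by_cases hdiam : ENNReal.ofReal t ≤ EMetric.diam E
    · exact (hE_reg x hx t ht hdiam).2
    · push_neg at hdiam
      have hfin : EMetric.diam E ≠ ⊤ := hdiam.ne_top
      set d := (EMetric.diam E).toReal with hd
      have hd0 : 0 < d :=
        ENNReal.toReal_pos (EMetric.diam_pos_iff.2 hE_nontriv).ne' hfin
      have hdt : d ≤ t := by
        have h1 : ENNReal.ofReal d ≤ ENNReal.ofReal t := by
          rw [hd, ENNReal.ofReal_toReal hfin]; exact hdiam.le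
        exact (ENNReal.ofReal_le_ofReal_iff ht.le).1 h1
      have hbd : Bornology.IsBounded E := Metric.isBounded_iff_ediam_ne_top.2 hfin
      have hsub : E ∩ closedBall x t = E ∩ closedBall x d := by
        apply subset_antisymm
        · rintro z ⟨hzE, -⟩
          exact ⟨hzE, mem_closedBall.2 (Metric.dist_le_diam_of_mem hbd hzE hx)⟩
        · rintro z ⟨hzE, hzb⟩
          exact ⟨hzE, mem_closedBall.2 (le_trans (mem_closedBall.1 hzb) hdt)⟩
      rw [hsub]
      refine le_trans (hE_reg x hx d hd0 (by rw [hd, ENNReal.ofReal_toReal hfin])).2 ?_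
      apply ENNReal.ofReal_le_ofReal
      have h2 : d ^ n ≤ t ^ n := Real.rpow_le_rpow hd0.le hdt (by linarith)
      nlinarith
  have hballfin : ∀ (R : ℕ), μ (closedBall x0 R) < ⊤ := by
    intro R
    refine lt_of_le_of_lt (le_trans (measure_mono (closedBall_subset_closedBall
      (by exact_mod_cast (Nat.le_succ R) : (R:ℝ) ≤ (R:ℝ)+1)))
      (hball x0 hx0 ((R:ℝ)+1) (by positivity))) ENNReal.ofReal_lt_top
  haveI : SigmaFinite μ :=
    ⟨⟨⟨fun k => closedBall x0 k, fun _ => trivial, fun k => hballfin k,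
      iUnion_closedBall_nat x0⟩⟩⟩
  -- measurable representative
  obtain ⟨f', hf'meas, hff'⟩ : ∃ f', StronglyMeasurable f' ∧ f =ᵐ[μ] f' :=
    ⟨hf.1.mk f, hf.1.stronglyMeasurable_mk, hf.1.ae_eq_mk⟩
  set F : EuclideanSpace ℝ (Fin m) → ℝ≥0∞ := fun z => (‖f' z‖₊ : ℝ≥0∞) with hFdef
  have hF : Measurable F := hf'meas.measurable.nnnorm.coe_nnreal_ennreal
  have hq0 : (0:ℝ) < q := by linarith
  have hFq : ∫⁻ z, F z ^ q ∂μ < ⊤ := by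
    have h1 := hf.2
    rw [eLpNorm_eq_lintegral_rpow_enorm_toReal (by simp [ENNReal.ofReal_eq_zero, not_le, hq0] : ENNReal.ofReal q ≠ 0)
      ENNReal.ofReal_ne_top, ENNReal.toReal_ofReal hq0.le] at h1
    have h2 : ∫⁻ z, ((‖f z‖₊ : ℝ≥0∞)) ^ q ∂μ < ⊤ :=
      (ENNReal.rpow_lt_top_iff_of_pos (by positivity : (0:ℝ) < 1/q)).1 h1
    have h3 : ∫⁻ z, F z ^ q ∂μ = ∫⁻ z, ((‖f z‖₊ : ℝ≥0∞)) ^ q ∂μ := by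
      refine lintegral_congr_ae ?_
      filter_upwards [hff'] with z hz
      rw [hFdef]; rw [hz]
    rw [h3]; exact h2
  -- the constant K for the near part
  set K : ℝ≥0∞ := ENNReal.ofReal (C * 2 ^ (n-1)) *
    (1 - ENNReal.ofReal ((2:ℝ) ^ ((n-1) - n)))⁻¹ with hKdef
  have hgeom : ∀ s : ℝ, s < 0 → (1 - ENNReal.ofReal ((2:ℝ) ^ s))⁻¹ < ⊤ := by
    intro s hs
    refine ENNReal.inv_lt_top.2 ?_
    rw [tsub_pos_iff_lt]
    exact ENNReal.ofReal_lt_one.2 (Real.rpow_lt_one_of_one_lt_of_neg one_lt_two hs)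
  have hKlt : K < ⊤ :=
    ENNReal.mul_lt_top ENNReal.ofReal_lt_top (hgeom _ (by linarith))
  have hK : ∀ z ∈ E, ∫⁻ x in closedBall z 1,
      ENNReal.ofReal (dist z x ^ (-(n-1))) ∂μ ≤ K := by
    intro z hz
    exact near_est μ z hC.le (by linarith) (by linarith) (hball z hz)
  -- far part: finite for every x ∈ E
  have hfar : ∀ x ∈ E, ∫⁻ z in (closedBall x 1)ᶜ,
      ENNReal.ofReal (dist x z ^ (-(n-1))) * F z ∂μ < ⊤ := by
    intro x hx
    rcases eq_or_lt_of_le hq1 with hq | hq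
    · -- q = 1
      have hgle : ∀ z ∈ (closedBall x 1)ᶜ,
          ENNReal.ofReal (dist x z ^ (-(n-1))) ≤ 1 := by
        intro z hz
        have hd1 : (1:ℝ) ≤ dist x z := by
          rw [dist_comm]; exact (not_le.1 (fun h => hz (mem_closedBall.2 h))).le
        calc ENNReal.ofReal (dist x z ^ (-(n-1)))
            ≤ ENNReal.ofReal ((1:ℝ) ^ (-(n-1))) := ENNReal.ofReal_le_ofReal
              (Real.rpow_le_rpow_of_nonpos one_pos hd1 (by linarith))
          _ = 1 := by rw [Real.one_rpow, ENNReal.ofReal_one]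
      calc ∫⁻ z in (closedBall x 1)ᶜ, ENNReal.ofReal (dist x z ^ (-(n-1))) * F z ∂μ
          ≤ ∫⁻ z in (closedBall x 1)ᶜ, 1 * F z ∂μ :=
            setLIntegral_mono' measurableSet_closedBall.compl
              (fun z hz => mul_le_mul_left (hgle z hz) _)
        _ = ∫⁻ z in (closedBall x 1)ᶜ, F z ∂μ := by simp
        _ ≤ ∫⁻ z, F z ∂μ := setLIntegral_le_lintegral _ _
        _ = ∫⁻ z, F z ^ q ∂μ := by
            refine lintegral_congr fun z => ?_
            rw [← hq, ENNReal.rpow_one]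
        _ < ⊤ := hFq
    · -- 1 < q, use Hölder
      set p : ℝ := Real.conjExponent q with hpdef
      have hpq : p.HolderConjugate q := (Real.HolderConjugate.conjExponent hq).symm
      have hg_meas : Measurable fun z => ENNReal.ofReal (dist x z ^ (-(n-1))) := by
        fun_prop
      have hold := ENNReal.lintegral_mul_le_Lp_mul_Lq (μ.restrict (closedBall x 1)ᶜ) hpq
        hg_meas.aemeasurable hF.aemeasurable
      have hq1' : (0:ℝ) < q - 1 := by linarith
      have hp_eq : p = q / (q - 1) := rfl
      have hnp : n < (n-1) * p := by
        have h2 : (n-1) * p = ((n-1)*q)/(q-1) := by rw [hp_eq]; ring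
        rw [h2, lt_div_iff₀ hq1']
        nlinarith
      have hfac1 : ∫⁻ z in (closedBall x 1)ᶜ,
          (ENNReal.ofReal (dist x z ^ (-(n-1)))) ^ p ∂μ < ⊤ := by
        have heq : ∀ z : EuclideanSpace ℝ (Fin m),
            (ENNReal.ofReal (dist x z ^ (-(n-1)))) ^ p =
            ENNReal.ofReal (dist x z ^ (-((n-1) * p))) := by
          intro z
          rw [ENNReal.ofReal_rpow_of_nonneg (Real.rpow_nonneg dist_nonneg _) hpq.nonneg,
            ← Real.rpow_mul dist_nonneg, neg_mul]
        simp only [heq]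
        refine lt_of_le_of_lt (far_est μ x hC.le (by linarith : (0:ℝ) ≤ n) hnp (hball x hx)) ?_
        exact ENNReal.mul_lt_top ENNReal.ofReal_lt_top (hgeom _ (by linarith))
      have hfac2 : ∫⁻ z in (closedBall x 1)ᶜ, F z ^ q ∂μ < ⊤ :=
        lt_of_le_of_lt (setLIntegral_le_lintegral _ _) hFq
      refine lt_of_le_of_lt (le_trans (le_of_eq ?_) hold) ?_
      · rfl
      · exact ENNReal.mul_lt_top
          (ENNReal.rpow_lt_top_of_nonneg (div_nonneg zero_le_one hpq.nonneg) hfac1.ne)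
          (ENNReal.rpow_lt_top_of_nonneg (div_nonneg zero_le_one hq0.le) hfac2.ne)
    -- near part: kernel and measurability
  set gker : EuclideanSpace ℝ (Fin m) × EuclideanSpace ℝ (Fin m) → ℝ≥0∞ := fun pr =>
    if dist pr.1 pr.2 ≤ 1 then ENNReal.ofReal (dist pr.1 pr.2 ^ (-(n-1))) else 0 with hgker
  have hgker_meas : Measurable gker := by
    refine Measurable.ite ?_ (by fun_prop) measurable_const
    exact measurableSet_le measurable_dist measurable_const
  set Near : EuclideanSpace ℝ (Fin m) → ℝ≥0∞ := fun x =>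
    ∫⁻ z, gker (x, z) * F z ∂μ with hNdef
  have hNear_meas : Measurable Near := by
    apply Measurable.lintegral_prod_right
    exact hgker_meas.mul (hF.comp measurable_snd)
  have hNear_eq : ∀ x, Near x =
      ∫⁻ z in closedBall x 1, ENNReal.ofReal (dist x z ^ (-(n-1))) * F z ∂μ := by
    intro x
    rw [← lintegral_indicator measurableSet_closedBall]
    refine lintegral_congr fun z => ?_
    simp only [hgker, indicator_apply, mem_closedBall]
    rw [dist_comm z x]
    split_ifs with h
    · rfl
    · rw [zero_mul]
  have hInner : ∀ z ∈ E, ∀ R : ℕ, ∫⁻ x in closedBall x0 R, gker (x, z) ∂μ ≤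
      (closedBall x0 ((R:ℝ)+1)).indicator (fun _ => K) z := by
    intro z hz R
    by_cases hzB : z ∈ closedBall x0 ((R:ℝ)+1)
    · rw [indicator_of_mem hzB]
      calc ∫⁻ x in closedBall x0 (R:ℝ), gker (x,z) ∂μ
          ≤ ∫⁻ x, gker (x,z) ∂μ := setLIntegral_le_lintegral _ _
        _ = ∫⁻ x in closedBall z 1, ENNReal.ofReal (dist z x ^ (-(n-1))) ∂μ := by
            rw [← lintegral_indicator measurableSet_closedBall]
            refine lintegral_congr fun x => ?_
            simp only [hgker, indicator_apply, mem_closedBall]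
            rw [dist_comm x z]
        _ ≤ K := hK z hz
    · rw [indicator_of_notMem hzB]
      have hzero : ∀ x ∈ closedBall x0 (R:ℝ), gker (x,z) = 0 := by
        intro x hx
        have hnd : ¬ dist x z ≤ 1 := by
          intro h
          apply hzB
          rw [mem_closedBall] at hx ⊢
          calc dist z x0 ≤ dist z x + dist x x0 := dist_triangle _ _ _
            _ ≤ 1 + R := add_le_add (by rw [dist_comm]; exact h) hx
            _ = R + 1 := by ring
        simp [hgker, hnd]
      calc ∫⁻ x in closedBall x0 (R:ℝ), gker (x,z) ∂μ
          ≤ ∫⁻ _ in closedBall x0 (R:ℝ), 0 ∂μ :=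
            setLIntegral_mono' measurableSet_closedBall
              (fun x hx => le_of_eq (hzero x hx))
        _ = 0 := by simp
  have hJ : ∀ R : ℕ, ∫⁻ x in closedBall x0 R, Near x ∂μ < ⊤ := by
    intro R
    have hswap : ∫⁻ x in closedBall x0 (R:ℝ), Near x ∂μ =
        ∫⁻ z, (∫⁻ x in closedBall x0 (R:ℝ), gker (x,z) ∂μ) * F z ∂μ := by
      calc ∫⁻ x in closedBall x0 (R:ℝ), ∫⁻ z, gker (x,z) * F z ∂μ ∂μ
          = ∫⁻ z, ∫⁻ x in closedBall x0 (R:ℝ), gker (x,z) * F z ∂μ ∂μ :=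
            lintegral_lintegral_swap
              ((hgker_meas.mul (hF.comp measurable_snd)).aemeasurable)
        _ = ∫⁻ z, (∫⁻ x in closedBall x0 (R:ℝ), gker (x,z) ∂μ) * F z ∂μ := by
            refine lintegral_congr fun z => ?_
            exact lintegral_mul_const _ (hgker_meas.comp measurable_prodMk_right)
    rw [hswap]
    have hb : ∫⁻ z, (∫⁻ x in closedBall x0 (R:ℝ), gker (x,z) ∂μ) * F z ∂μ ≤
        ∫⁻ z, (closedBall x0 ((R:ℝ)+1)).indicator (fun _ => K) z * F z ∂μ := by
      refine lintegral_mono_ae ?_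
      have hae : ∀ᵐ z ∂μ, z ∈ E := by
        rw [hμdef]; exact ae_restrict_mem hE_meas
      filter_upwards [hae] with z hz
      exact mul_le_mul_left (hInner z hz R) _
    refine lt_of_le_of_lt hb ?_
    have hind : ∫⁻ z, (closedBall x0 ((R:ℝ)+1)).indicator (fun _ => K) z * F z ∂μ =
        K * ∫⁻ z in closedBall x0 ((R:ℝ)+1), F z ∂μ := by
      calc ∫⁻ z, (closedBall x0 ((R:ℝ)+1)).indicator (fun _ => K) z * F z ∂μ
          = ∫⁻ z, (closedBall x0 ((R:ℝ)+1)).indicator (fun w => K * F w) z ∂μ := by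
            refine lintegral_congr fun z => ?_
            simp only [indicator_apply]
            split_ifs
            · rfl
            · rw [zero_mul]
        _ = ∫⁻ z in closedBall x0 ((R:ℝ)+1), K * F z ∂μ :=
            lintegral_indicator measurableSet_closedBall _
        _ = K * ∫⁻ z in closedBall x0 ((R:ℝ)+1), F z ∂μ := lintegral_const_mul K hF
    rw [hind]
    have hFle : ∫⁻ z in closedBall x0 ((R:ℝ)+1), F z ∂μ ≤
        μ (closedBall x0 ((R:ℝ)+1)) + ∫⁻ z, F z ^ q ∂μ := by
      have hpt : ∀ z, F z ≤ 1 + F z ^ q := by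
        intro z
        rcases le_total (F z) 1 with h | h
        · exact h.trans le_self_add
        · calc F z = F z ^ (1:ℝ) := (ENNReal.rpow_one _).symm
            _ ≤ F z ^ q := ENNReal.rpow_le_rpow_of_exponent_le h hq1
            _ ≤ 1 + F z ^ q := le_add_self
      calc ∫⁻ z in closedBall x0 ((R:ℝ)+1), F z ∂μ
          ≤ ∫⁻ z in closedBall x0 ((R:ℝ)+1), (1 + F z ^ q) ∂μ :=
            lintegral_mono fun z => hpt z
        _ = μ (closedBall x0 ((R:ℝ)+1)) + ∫⁻ z in closedBall x0 ((R:ℝ)+1), F z ^ q ∂μ := by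
            rw [lintegral_add_left measurable_const]
            simp [Measure.restrict_apply MeasurableSet.univ]
        _ ≤ μ (closedBall x0 ((R:ℝ)+1)) + ∫⁻ z, F z ^ q ∂μ :=
            add_le_add_right (setLIntegral_le_lintegral _ _) _
    refine lt_of_le_of_lt (mul_le_mul_right hFle K) (ENNReal.mul_lt_top hKlt ?_)
    refine ENNReal.add_lt_top.2 ⟨?_, hFq⟩
    exact lt_of_le_of_lt (hball x0 hx0 ((R:ℝ)+1) (by positivity)) ENNReal.ofReal_lt_top
  -- near part a.e. finite
  have hNae : ∀ᵐ x ∂μ, Near x < ⊤ := by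
    have hnull : ∀ R : ℕ, μ ({x | ¬ Near x < ⊤} ∩ closedBall x0 R) = 0 := by
      intro R
      have h1 : ∀ᵐ x ∂μ.restrict (closedBall x0 (R:ℝ)), Near x < ⊤ :=
        ae_lt_top hNear_meas (hJ R).ne
      rw [ae_iff] at h1
      rwa [Measure.restrict_apply' measurableSet_closedBall] at h1
    have hsub : {x | ¬ Near x < ⊤} ⊆
        ⋃ R : ℕ, ({x | ¬ Near x < ⊤} ∩ closedBall x0 R) := by
      intro x hx
      have hmem : x ∈ ⋃ R : ℕ, closedBall x0 (R:ℝ) := by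
        rw [iUnion_closedBall_nat]; trivial
      obtain ⟨R, hR⟩ := mem_iUnion.1 hmem
      exact mem_iUnion.2 ⟨R, hx, hR⟩
    rw [ae_iff]
    simp only [not_lt, top_le_iff]
    have : μ {x | ¬ Near x < ⊤} = 0 :=
      le_antisymm (le_trans (measure_mono hsub) (le_of_eq (measure_iUnion_null hnull)))
        (zero_le)
    simpa [not_lt, top_le_iff] using this
  -- conclusion
  have hae : ∀ᵐ z ∂μ, z ∈ E := by
    rw [hμdef]; exact ae_restrict_mem hE_meas
  filter_upwards [hNae, hae] with x hN hxE
  have heq : ∫⁻ z, ENNReal.ofReal (dist x z ^ (-(n - 1))) * (‖f z‖₊ : ℝ≥0∞) ∂μ =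
      ∫⁻ z, ENNReal.ofReal (dist x z ^ (-(n - 1))) * F z ∂μ := by
    refine lintegral_congr_ae ?_
    filter_upwards [hff'] with z hz
    rw [hFdef]; rw [hz]
  rw [heq, ← lintegral_add_compl
    (fun z => ENNReal.ofReal (dist x z ^ (-(n - 1))) * F z) (measurableSet_closedBall
      (x := x) (ε := 1))]
  refine ENNReal.add_lt_top.2 ⟨?_, hfar x hxE⟩
  rw [← hNear_eq x]
  exact hN
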